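/- arXiv:2412.18338 — 2 statements merged into one kernel-verified Lean document; each statement's English description precedes it below -/
import Mathlib

section
/- For every continuously differentiable function x : [0,1] → ℝ with x(0) = x(1) = 0 one has the Poincaré inequality with constant 1/√2 on the unit interval: (∫₀¹ x(z)² dz)^{1/2} ≤ (1/√2) · (∫₀¹ x'(z)² dz)^{1/2}. -/
open MeasureTheory intervalIntegral Set

/-- Cauchy–Schwarz step: pointwise bound `x z ^ 2 ≤ z * ∫₀¹ x'²`. -/
lemma aux_pointwise (x : ℝ → ℝ) (hx : ContDiff ℝ 1 x) (h0 : x 0 = 0)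
    {z : ℝ} (hz0 : 0 ≤ z) (hz1 : z ≤ 1) :
    x z ^ 2 ≤ z * ∫ t in (0:ℝ)..1, (deriv x t) ^ 2 := by
  have hc : Continuous (deriv x) := hx.continuous_deriv le_rfl
  set D : ℝ := ∫ t in (0:ℝ)..1, (deriv x t) ^ 2 with hD
  -- FTC
  have hxz : x z = ∫ t in Ioc (0:ℝ) z, deriv x t := by
    have h := intervalIntegral.integral_deriv_eq_sub
      (f := x) (a := 0) (b := z)
      (fun t _ => (hx.differentiable one_ne_zero).differentiableAt)
      (hc.intervalIntegrable 0 z)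
    rw [h0, sub_zero] at h
    rw [← h, intervalIntegral.integral_of_le hz0]
  set μ : Measure ℝ := volume.restrict (Ioc (0:ℝ) z) with hμ
  have hμfin : μ (Set.univ) < ⊤ := by
    rw [hμ, Measure.restrict_apply_univ]
    exact measure_Ioc_lt_top
  -- Cauchy–Schwarz via Hölder
  have hpq : Real.HolderConjugate 2 2 := (Real.holderConjugate_iff_eq_conjExponent one_lt_two).mpr (by norm_num)
  have hf2 : MeasureTheory.MemLp (fun t => |deriv x t|) (ENNReal.ofReal 2) μ := by
    rw [show ENNReal.ofReal 2 = 2 by norm_num]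
    rw [memLp_two_iff_integrable_sq hc.abs.aestronglyMeasurable]
    exact ((hc.abs.pow 2).integrableOn_Ioc)
  have hg2 : MeasureTheory.MemLp (fun _ : ℝ => (1:ℝ)) (ENNReal.ofReal 2) μ := by
    rw [show ENNReal.ofReal 2 = 2 by norm_num]
    exact memLp_const 1
  have hCS := MeasureTheory.integral_mul_le_Lp_mul_Lq_of_nonneg hpq
    (Filter.Eventually.of_forall fun t => abs_nonneg _)
    (Filter.Eventually.of_forall fun _ => zero_le_one) hf2 hg2
  simp only [mul_one, Real.one_rpow] at hCS
  -- rewrite the rpow exponents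
  have hrpow : ∀ a : ℝ, a ^ (2:ℝ) = a ^ (2:ℕ) := fun a => by
    rw [← Real.rpow_natCast a 2]; norm_num
  have hμz : ∫ _ : ℝ, (1:ℝ) ∂μ = z := by
    rw [hμ, setIntegral_const, smul_eq_mul, mul_one, Real.volume_real_Ioc_of_le hz0, sub_zero]
  rw [hμz] at hCS
  have habs : |x z| ≤ ∫ t, |deriv x t| ∂μ := by
    rw [hxz]
    simpa [Real.norm_eq_abs] using
      MeasureTheory.norm_integral_le_integral_norm (μ := μ) (deriv x)
  have hIz : ∫ t, |deriv x t| ^ (2:ℝ) ∂μ = ∫ t in Ioc (0:ℝ) z, (deriv x t) ^ 2 := by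
    refine integral_congr_ae (Filter.Eventually.of_forall fun t => ?_)
    show |deriv x t| ^ (2:ℝ) = deriv x t ^ 2
    rw [hrpow, sq_abs]
  rw [hIz] at hCS
  -- ∫ over Ioc 0 z of x'² ≤ D
  have hmono : ∫ t in Ioc (0:ℝ) z, (deriv x t) ^ 2 ≤ D := by
    rw [hD, intervalIntegral.integral_of_le (by norm_num : (0:ℝ) ≤ 1)]
    refine setIntegral_mono_set ((hc.pow 2).integrableOn_Ioc)
      (Filter.Eventually.of_forall fun t => sq_nonneg _)
      (HasSubset.Subset.eventuallyLE (Ioc_subset_Ioc_right hz1))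
  have hInonneg : 0 ≤ ∫ t in Ioc (0:ℝ) z, (deriv x t) ^ 2 :=
    setIntegral_nonneg measurableSet_Ioc fun t _ => sq_nonneg _
  have hAnn : 0 ≤ ∫ t, |deriv x t| ∂μ :=
    integral_nonneg fun t => abs_nonneg _
  calc x z ^ 2 = |x z| ^ 2 := (sq_abs _).symm
    _ ≤ (∫ t, |deriv x t| ∂μ) ^ 2 := by
        exact pow_le_pow_left₀ (abs_nonneg _) habs 2
    _ ≤ ((∫ t in Ioc (0:ℝ) z, (deriv x t) ^ 2) ^ ((1:ℝ)/2) * z ^ ((1:ℝ)/2)) ^ 2 := by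
        exact pow_le_pow_left₀ hAnn hCS 2
    _ = (∫ t in Ioc (0:ℝ) z, (deriv x t) ^ 2) * z := by
        rw [mul_pow, ← Real.sqrt_eq_rpow, ← Real.sqrt_eq_rpow,
          Real.sq_sqrt hInonneg, Real.sq_sqrt hz0]
    _ ≤ D * z := mul_le_mul_of_nonneg_right hmono hz0
    _ = z * D := mul_comm _ _

/-- **Poincaré inequality on (0,1) with constant 1/√2.**
For every continuously differentiable `x : [0,1] → ℝ` with `x 0 = x 1 = 0` one has
`‖x‖_{L²(0,1)} ≤ (1/√2)·‖x'‖_{L²(0,1)}`. -/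
theorem stmt_0 (x : ℝ → ℝ) (hx : ContDiff ℝ 1 x) (h0 : x 0 = 0) (h1 : x 1 = 0) :
    Real.sqrt (∫ z in (0:ℝ)..1, (x z) ^ 2) ≤
      (1 / Real.sqrt 2) * Real.sqrt (∫ z in (0:ℝ)..1, (deriv x z) ^ 2) := by
  set D : ℝ := ∫ t in (0:ℝ)..1, (deriv x t) ^ 2 with hD
  have hD0 : 0 ≤ D :=
    intervalIntegral.integral_nonneg (by norm_num) fun t _ => sq_nonneg _
  have hkey : ∫ z in (0:ℝ)..1, (x z) ^ 2 ≤ D / 2 := by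
    have h1' : ∫ z in (0:ℝ)..1, z * D = D / 2 := by
      rw [intervalIntegral.integral_mul_const, integral_id]
      ring
    calc ∫ z in (0:ℝ)..1, (x z) ^ 2
        ≤ ∫ z in (0:ℝ)..1, z * D := by
          refine intervalIntegral.integral_mono_on (by norm_num)
            ((hx.continuous.pow 2).intervalIntegrable 0 1)
            (((continuous_id.mul continuous_const)).intervalIntegrable 0 1)
            fun z hz => aux_pointwise x hx h0 hz.1 hz.2
      _ = D / 2 := h1'
  calc Real.sqrt (∫ z in (0:ℝ)..1, (x z) ^ 2)
      ≤ Real.sqrt (D / 2) := Real.sqrt_le_sqrt hkey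
    _ = (1 / Real.sqrt 2) * Real.sqrt D := by
        rw [Real.sqrt_div hD0, div_eq_mul_inv, one_div, mul_comm]
end

section
/- Let α ∈ [0, 1/2]. For every x in the linear span of {h_k : k ≥ 1}, that is, every finite linear combination x = Σ_{k=1}^{n} a_k h_k with real coefficients, one has ‖(-A)^{−α} ( ((-A)^{α − 1/2} x)' )‖_{L²} ≤ ‖x‖_{L²}, where ((-A)^{α−1/2} x)' = Σ_{k=1}^{n} (πk)^{2α} a_k · √2·cos(kπ·) denotes the classical derivative of the trigonometric polynomial (-A)^{α−1/2} x = Σ_{k=1}^{n} (πk)^{2α−1} a_k h_k. (Equivalently: the densely defined operator (-A)^{−α} ∇ (-A)^{−1/2+α} has operator norm at most 1 on L²(0,1).) -/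
open Real MeasureTheory

/-- `h_{k+1}(z) = √2·sin((k+1)πz)`, the eigenfunctions of the Dirichlet Laplacian on `(0,1)`. -/
noncomputable def eigfun (k : ℕ) (z : ℝ) : ℝ := Real.sqrt 2 * Real.sin ((k + 1 : ℝ) * π * z)

/-- `g_{k+1}(z) = √2·cos((k+1)πz)`. -/
noncomputable def cosfun (k : ℕ) (z : ℝ) : ℝ := Real.sqrt 2 * Real.cos ((k + 1 : ℝ) * π * z)

lemma cont_eig (k : ℕ) : Continuous (eigfun k) := by
  unfold eigfun; fun_prop

lemma cont_cos (k : ℕ) : Continuous (cosfun k) := by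
  unfold cosfun; fun_prop

lemma intOn {f : ℝ → ℝ} (hf : Continuous f) : IntegrableOn f (Set.Ioo (0:ℝ) 1) volume :=
  (hf.integrableOn_Icc).mono_set Set.Ioo_subset_Icc_self

lemma ioo_eq_interval (f : ℝ → ℝ) :
    (∫ z in Set.Ioo (0:ℝ) 1, f z) = ∫ z in (0:ℝ)..1, f z := by
  rw [intervalIntegral.integral_of_le zero_le_one, integral_Ioc_eq_integral_Ioo]

lemma integral_cos_int (m : ℤ) :
    (∫ z in Set.Ioo (0:ℝ) 1, Real.cos ((m : ℝ) * π * z)) = if m = 0 then 1 else 0 := by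
  rw [ioo_eq_interval]
  by_cases hm : m = 0
  · simp [hm]
  · have hc : (m : ℝ) * π ≠ 0 := by
      apply mul_ne_zero (by exact_mod_cast hm) pi_ne_zero
    have : (∫ z in (0:ℝ)..1, Real.cos ((m : ℝ) * π * z)) =
        ∫ z in (0:ℝ)..1, Real.cos (((m : ℝ) * π) * z) := by
      congr 1
    rw [this, intervalIntegral.integral_comp_mul_left (f := Real.cos) hc]
    simp [integral_cos, Real.sin_int_mul_pi, hm]

lemma prod_sin_sin (j k : ℕ) (z : ℝ) :
    eigfun j z * eigfun k z
      = Real.cos ((((j:ℤ) - (k:ℤ) : ℤ) : ℝ) * π * z) - Real.cos ((((j:ℤ) + (k:ℤ) + 2 : ℤ) : ℝ) * π * z) := by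
  have h2 : Real.sqrt 2 * Real.sqrt 2 = 2 := Real.mul_self_sqrt (by norm_num)
  unfold eigfun
  push_cast
  have key : Real.cos (((j:ℝ)-k)*π*z) - Real.cos (((j:ℝ)+k+2)*π*z)
      = 2 * (Real.sin (((j:ℝ)+1)*π*z) * Real.sin (((k:ℝ)+1)*π*z)) := by
    rw [Real.cos_sub_cos]
    rw [show ((((j:ℝ)-k)*π*z) + (((j:ℝ)+k+2)*π*z))/2 = ((j:ℝ)+1)*π*z by ring]
    rw [show ((((j:ℝ)-k)*π*z) - (((j:ℝ)+k+2)*π*z))/2 = -(((k:ℝ)+1)*π*z) by ring]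
    rw [Real.sin_neg]; ring
  rw [key]; linear_combination (Real.sin (((j:ℝ)+1)*π*z) * Real.sin (((k:ℝ)+1)*π*z)) * h2

lemma prod_cos_cos (j k : ℕ) (z : ℝ) :
    cosfun j z * cosfun k z
      = Real.cos ((((j:ℤ) - (k:ℤ) : ℤ) : ℝ) * π * z) + Real.cos ((((j:ℤ) + (k:ℤ) + 2 : ℤ) : ℝ) * π * z) := by
  have h2 : Real.sqrt 2 * Real.sqrt 2 = 2 := Real.mul_self_sqrt (by norm_num)
  unfold cosfun
  push_cast
  have key : Real.cos (((j:ℝ)-k)*π*z) + Real.cos (((j:ℝ)+k+2)*π*z)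
      = 2 * (Real.cos (((j:ℝ)+1)*π*z) * Real.cos (((k:ℝ)+1)*π*z)) := by
    rw [Real.cos_add_cos]
    rw [show ((((j:ℝ)-k)*π*z) + (((j:ℝ)+k+2)*π*z))/2 = ((j:ℝ)+1)*π*z by ring]
    rw [show ((((j:ℝ)-k)*π*z) - (((j:ℝ)+k+2)*π*z))/2 = -(((k:ℝ)+1)*π*z) by ring]
    rw [Real.cos_neg]; ring
  rw [key]; linear_combination (Real.cos (((j:ℝ)+1)*π*z) * Real.cos (((k:ℝ)+1)*π*z)) * h2

lemma orth_sin (j k : ℕ) :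
    (∫ z in Set.Ioo (0:ℝ) 1, eigfun j z * eigfun k z) = if j = k then 1 else 0 := by
  have hint : ∀ m : ℤ, IntegrableOn (fun z => Real.cos ((m:ℝ) * π * z)) (Set.Ioo (0:ℝ) 1) volume :=
    fun m => intOn (by fun_prop)
  rw [show (∫ z in Set.Ioo (0:ℝ) 1, eigfun j z * eigfun k z)
      = ∫ z in Set.Ioo (0:ℝ) 1, (Real.cos ((((j:ℤ) - (k:ℤ) : ℤ) : ℝ) * π * z)
        - Real.cos ((((j:ℤ) + (k:ℤ) + 2 : ℤ) : ℝ) * π * z)) from by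
    exact setIntegral_congr_fun measurableSet_Ioo (fun z _ => prod_sin_sin j k z)]
  rw [integral_sub (hint _) (hint _), integral_cos_int, integral_cos_int]
  have h2 : ¬ ((j:ℤ) + k + 2 = 0) := by positivity
  by_cases h : j = k
  · subst h; simp [h2]
  · have : ¬ ((j:ℤ) - k = 0) := by
      simp only [sub_eq_zero]; exact_mod_cast h
    simp [h, this, h2]

lemma orth_cos (j k : ℕ) :
    (∫ z in Set.Ioo (0:ℝ) 1, cosfun j z * cosfun k z) = if j = k then 1 else 0 := by
  have hint : ∀ m : ℤ, IntegrableOn (fun z => Real.cos ((m:ℝ) * π * z)) (Set.Ioo (0:ℝ) 1) volume :=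
    fun m => intOn (by fun_prop)
  rw [show (∫ z in Set.Ioo (0:ℝ) 1, cosfun j z * cosfun k z)
      = ∫ z in Set.Ioo (0:ℝ) 1, (Real.cos ((((j:ℤ) - (k:ℤ) : ℤ) : ℝ) * π * z)
        + Real.cos ((((j:ℤ) + (k:ℤ) + 2 : ℤ) : ℝ) * π * z)) from by
    exact setIntegral_congr_fun measurableSet_Ioo (fun z _ => prod_cos_cos j k z)]
  rw [integral_add (hint _) (hint _), integral_cos_int, integral_cos_int]
  have h2 : ¬ ((j:ℤ) + k + 2 = 0) := by positivity
  by_cases h : j = k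
  · subst h; simp [h2]
  · have : ¬ ((j:ℤ) - k = 0) := by
      simp only [sub_eq_zero]; exact_mod_cast h
    simp [h, this, h2]

noncomputable def Cjk (j k : ℕ) : ℝ := ∫ z in Set.Ioo (0:ℝ) 1, cosfun k z * eigfun j z

/-- Integration by parts: `(k+1) C j k + (j+1) C k j = 0`. -/
lemma Cjk_skew (j k : ℕ) : ((k:ℝ)+1) * Cjk j k + ((j:ℝ)+1) * Cjk k j = 0 := by
  set F : ℝ → ℝ := fun z => eigfun k z * eigfun j z with hF
  have hderiv : ∀ z ∈ Set.uIcc (0:ℝ) 1, HasDerivAt F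
      ((((k:ℝ)+1) * π * cosfun k z * eigfun j z + ((j:ℝ)+1) * π * cosfun j z * eigfun k z)) z := by
    intro z _
    have h1 : HasDerivAt (fun z => Real.sin (((k:ℝ)+1) * π * z)) (Real.cos (((k:ℝ)+1)*π*z) * (((k:ℝ)+1)*π)) z := by
      have := (Real.hasDerivAt_sin ((((k:ℝ)+1)*π)*z)).comp z
        ((hasDerivAt_id z).const_mul (((k:ℝ)+1)*π))
      simpa [Function.comp_def] using this
    have h2 : HasDerivAt (fun z => Real.sin (((j:ℝ)+1) * π * z)) (Real.cos (((j:ℝ)+1)*π*z) * (((j:ℝ)+1)*π)) z := by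
      have := (Real.hasDerivAt_sin ((((j:ℝ)+1)*π)*z)).comp z
        ((hasDerivAt_id z).const_mul (((j:ℝ)+1)*π))
      simpa [Function.comp_def] using this
    have hk : HasDerivAt (eigfun k) (Real.sqrt 2 * (Real.cos (((k:ℝ)+1)*π*z) * (((k:ℝ)+1)*π))) z := by
      unfold eigfun; exact h1.const_mul _
    have hj : HasDerivAt (eigfun j) (Real.sqrt 2 * (Real.cos (((j:ℝ)+1)*π*z) * (((j:ℝ)+1)*π))) z := by
      unfold eigfun; exact h2.const_mul _
    have := hk.mul hj
    exact this.congr_deriv (by unfold eigfun cosfun; ring)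
  have hcont : IntervalIntegrable
      (fun z => (((k:ℝ)+1) * π * cosfun k z * eigfun j z + ((j:ℝ)+1) * π * cosfun j z * eigfun k z))
      volume 0 1 := by
    apply Continuous.intervalIntegrable
    have := cont_cos k; have := cont_cos j; have := cont_eig k; have := cont_eig j
    fun_prop
  have key := intervalIntegral.integral_eq_sub_of_hasDerivAt hderiv hcont
  have hs : ∀ i : ℕ, Real.sin (((i:ℝ)+1) * π) = 0 := by
    intro i; have := Real.sin_nat_mul_pi (i+1); push_cast at this; exact this
  have hF1 : F 1 = 0 := by simp [hF, eigfun, hs k]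
  have hF0 : F 0 = 0 := by simp [hF, eigfun]
  rw [hF1, hF0, sub_zero] at key
  have hsplit : (∫ z in (0:ℝ)..1,
      (((k:ℝ)+1) * π * cosfun k z * eigfun j z + ((j:ℝ)+1) * π * cosfun j z * eigfun k z))
      = ((k:ℝ)+1) * π * Cjk j k + ((j:ℝ)+1) * π * Cjk k j := by
    have i1 : IntervalIntegrable (fun z => ((k:ℝ)+1) * π * (cosfun k z * eigfun j z)) volume 0 1 := by
      apply Continuous.intervalIntegrable
      have := cont_cos k; have := cont_eig j; fun_prop
    have i2 : IntervalIntegrable (fun z => ((j:ℝ)+1) * π * (cosfun j z * eigfun k z)) volume 0 1 := by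
      apply Continuous.intervalIntegrable
      have := cont_cos j; have := cont_eig k; fun_prop
    rw [show (fun z => (((k:ℝ)+1) * π * cosfun k z * eigfun j z + ((j:ℝ)+1) * π * cosfun j z * eigfun k z))
        = (fun z => ((k:ℝ)+1) * π * (cosfun k z * eigfun j z) + ((j:ℝ)+1) * π * (cosfun j z * eigfun k z)) from by
      funext z; ring]
    rw [intervalIntegral.integral_add i1 i2, intervalIntegral.integral_const_mul,
      intervalIntegral.integral_const_mul]
    unfold Cjk
    rw [← ioo_eq_interval, ← ioo_eq_interval]
  rw [hsplit] at key
  have h0 : π * (((k:ℝ)+1) * Cjk j k + ((j:ℝ)+1) * Cjk k j) = 0 := by linear_combination key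
  rcases mul_eq_zero.mp h0 with h | h
  · exact absurd h pi_ne_zero
  · exact h

lemma int_combo (N : ℕ) (p : ℕ → ℝ) (j : ℕ) :
    (∫ z in Set.Ioo (0:ℝ) 1, (∑ k ∈ Finset.range N, p k * cosfun k z) * eigfun j z)
      = ∑ k ∈ Finset.range N, p k * Cjk j k := by
  have : ∀ z, (∑ k ∈ Finset.range N, p k * cosfun k z) * eigfun j z
      = ∑ k ∈ Finset.range N, p k * (cosfun k z * eigfun j z) := by
    intro z; rw [Finset.sum_mul]; exact Finset.sum_congr rfl (fun k _ => by ring)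
  simp_rw [this]
  rw [integral_finset_sum _ (fun k _ => by
    apply Integrable.const_mul
    exact intOn ((cont_cos k).mul (cont_eig j)))]
  exact Finset.sum_congr rfl (fun k _ => by rw [integral_const_mul]; rfl)

lemma int_combo_sq (S : Finset ℕ) (c : ℕ → ℝ) (f : ℕ → ℝ → ℝ) (hf : ∀ i, Continuous (f i))
    (horth : ∀ i j, (∫ z in Set.Ioo (0:ℝ) 1, f i z * f j z) = if i = j then 1 else 0) :
    (∫ z in Set.Ioo (0:ℝ) 1, (∑ i ∈ S, c i * f i z)^2) = ∑ i ∈ S, (c i)^2 := by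
  have expand : ∀ z, (∑ i ∈ S, c i * f i z)^2
      = ∑ i ∈ S, ∑ j ∈ S, (c i * c j) * (f i z * f j z) := by
    intro z
    rw [sq, Finset.sum_mul_sum]
    exact Finset.sum_congr rfl (fun i _ => Finset.sum_congr rfl (fun j _ => by ring))
  simp_rw [expand]
  rw [integral_finset_sum _ (fun i _ => ?_)]
  · rw [Finset.sum_congr rfl (fun i (_ : i ∈ S) => integral_finset_sum S (fun j _ => ?_))]
    · have : ∀ i ∈ S, (∑ j ∈ S, ∫ z in Set.Ioo (0:ℝ) 1, (c i * c j) * (f i z * f j z))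
          = (c i)^2 := by
        intro i hi
        have : ∀ j ∈ S, (∫ z in Set.Ioo (0:ℝ) 1, (c i * c j) * (f i z * f j z))
            = (c i * c j) * if i = j then 1 else 0 := by
          intro j _
          rw [integral_const_mul, horth]
        rw [Finset.sum_congr rfl this]
        simp only [mul_ite, mul_one, mul_zero]
        rw [Finset.sum_ite_eq S i (fun x => c i * c x), if_pos hi, sq]
      exact Finset.sum_congr rfl this
    · exact ((intOn ((hf i).mul (hf j))).const_mul _)
  · apply integrable_finset_sum
    intro j _
    exact ((intOn ((hf i).mul (hf j))).const_mul _)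

lemma bessel (N : ℕ) (p : ℕ → ℝ) (S : Finset ℕ) :
    (∑ j ∈ S, (∑ k ∈ Finset.range N, p k * Cjk j k)^2) ≤ ∑ k ∈ Finset.range N, (p k)^2 := by
  set β : ℕ → ℝ := fun j => ∑ k ∈ Finset.range N, p k * Cjk j k with hβ
  set w : ℝ → ℝ := fun z => ∑ k ∈ Finset.range N, p k * cosfun k z with hw
  set s : ℝ → ℝ := fun z => ∑ j ∈ S, β j * eigfun j z with hs
  have hwc : Continuous w := continuous_finset_sum _ (fun k _ => (continuous_const.mul (cont_cos k)))
  have hsc : Continuous s := continuous_finset_sum _ (fun j _ => (continuous_const.mul (cont_eig j)))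
  have h1 : ∀ j, (∫ z in Set.Ioo (0:ℝ) 1, w z * eigfun j z) = β j := fun j => int_combo N p j
  have h2 : (∫ z in Set.Ioo (0:ℝ) 1, (w z)^2) = ∑ k ∈ Finset.range N, (p k)^2 :=
    int_combo_sq _ _ _ cont_cos orth_cos
  have h3 : (∫ z in Set.Ioo (0:ℝ) 1, (s z)^2) = ∑ j ∈ S, (β j)^2 :=
    int_combo_sq _ _ _ cont_eig orth_sin
  have h4 : (∫ z in Set.Ioo (0:ℝ) 1, w z * s z) = ∑ j ∈ S, (β j)^2 := by
    have : ∀ z, w z * s z = ∑ j ∈ S, β j * (w z * eigfun j z) := by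
      intro z; rw [hs]; dsimp only; rw [Finset.mul_sum]
      exact Finset.sum_congr rfl (fun j _ => by ring)
    simp_rw [this]
    rw [integral_finset_sum (f := fun j z => β j * (w z * eigfun j z)) _ (fun j _ => (intOn (hwc.mul (cont_eig j))).const_mul _)]
    exact Finset.sum_congr rfl (fun j _ => by rw [integral_const_mul, h1, sq])
  have h5 : (0:ℝ) ≤ ∫ z in Set.Ioo (0:ℝ) 1, (w z - s z)^2 :=
    setIntegral_nonneg measurableSet_Ioo (fun z _ => sq_nonneg _)
  have expand : (∫ z in Set.Ioo (0:ℝ) 1, (w z - s z)^2)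
      = (∫ z in Set.Ioo (0:ℝ) 1, (w z)^2) - 2 * (∫ z in Set.Ioo (0:ℝ) 1, w z * s z)
        + (∫ z in Set.Ioo (0:ℝ) 1, (s z)^2) := by
    have : ∀ z, (w z - s z)^2 = (w z)^2 - 2 * (w z * s z) + (s z)^2 := fun z => by ring
    simp_rw [this]
    rw [integral_add, integral_sub]
    · simp_rw [integral_const_mul]
    · exact intOn (by fun_prop)
    · exact (intOn (by fun_prop)).const_mul _
    · apply Integrable.sub (intOn (by fun_prop)) ((intOn (by fun_prop)).const_mul _)
    · exact intOn (by fun_prop)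
  rw [expand, h2, h3, h4] at h5
  linarith


lemma cs_sqrt (s : Finset ℕ) (f g : ℕ → ℝ) :
    (∑ i ∈ s, f i * g i) ≤ Real.sqrt (∑ i ∈ s, (f i)^2) * Real.sqrt (∑ i ∈ s, (g i)^2) := by
  have h := Finset.sum_mul_sq_le_sq_mul_sq s f g
  have h1 : (∑ i ∈ s, f i * g i) ≤ |∑ i ∈ s, f i * g i| := le_abs_self _
  have h2 : |∑ i ∈ s, f i * g i| = Real.sqrt ((∑ i ∈ s, f i * g i)^2) := (Real.sqrt_sq_eq_abs _).symm
  rw [h2] at h1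
  refine h1.trans ?_
  rw [← Real.sqrt_mul (Finset.sum_nonneg fun i _ => sq_nonneg _)]
  exact Real.sqrt_le_sqrt h

lemma edge (m n : ℕ) (v a : ℕ → ℝ) (U W : ℕ → ℂ)
    (hU : ∀ k, ‖U k‖ = 1) (hW : ∀ j, ‖W j‖ = 1) :
    ‖∑ j ∈ Finset.range m, ∑ k ∈ Finset.range n,
        ((v j : ℝ) : ℂ) * ((a k : ℝ) : ℂ) * (U k * W j) * ((Cjk j k : ℝ) : ℂ)‖
      ≤ Real.sqrt (∑ j ∈ Finset.range m, (v j)^2) *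
          Real.sqrt (∑ k ∈ Finset.range n, (a k)^2) := by
  set T : ℕ → ℂ := fun j => ∑ k ∈ Finset.range n, ((a k * Cjk j k : ℝ) : ℂ) * U k with hT
  have hre : ∀ j, (T j).re = ∑ k ∈ Finset.range n, (a k * (U k).re) * Cjk j k := by
    intro j
    rw [hT]; dsimp only
    rw [Complex.re_sum]
    exact Finset.sum_congr rfl (fun k _ => by rw [Complex.re_ofReal_mul]; ring)
  have him : ∀ j, (T j).im = ∑ k ∈ Finset.range n, (a k * (U k).im) * Cjk j k := by
    intro j
    rw [hT]; dsimp only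
    rw [Complex.im_sum]
    exact Finset.sum_congr rfl (fun k _ => by rw [Complex.im_ofReal_mul]; ring)
  have hG : (∑ j ∈ Finset.range m, ∑ k ∈ Finset.range n,
        ((v j : ℝ) : ℂ) * ((a k : ℝ) : ℂ) * (U k * W j) * ((Cjk j k : ℝ) : ℂ))
      = ∑ j ∈ Finset.range m, ((v j : ℝ) : ℂ) * W j * T j := by
    refine Finset.sum_congr rfl (fun j _ => ?_)
    rw [hT]; dsimp only
    rw [Finset.mul_sum]
    refine Finset.sum_congr rfl (fun k _ => ?_)
    push_cast; ring
  rw [hG]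
  have step1 : ‖∑ j ∈ Finset.range m, ((v j : ℝ) : ℂ) * W j * T j‖
      ≤ ∑ j ∈ Finset.range m, |v j| * ‖T j‖ := by
    refine (norm_sum_le _ _).trans (le_of_eq (Finset.sum_congr rfl (fun j _ => ?_)))
    rw [norm_mul, norm_mul, hW, Complex.norm_real, Real.norm_eq_abs, mul_one]
  refine step1.trans ?_
  have step2 : (∑ j ∈ Finset.range m, |v j| * ‖T j‖)
      ≤ Real.sqrt (∑ j ∈ Finset.range m, |v j|^2) *
          Real.sqrt (∑ j ∈ Finset.range m, ‖T j‖^2) :=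
    cs_sqrt _ _ _
  have hTs : (∑ j ∈ Finset.range m, ‖T j‖^2) ≤ ∑ k ∈ Finset.range n, (a k)^2 := by
    have hnorm : ∀ j, ‖T j‖^2 = (∑ k ∈ Finset.range n, (a k * (U k).re) * Cjk j k)^2
        + (∑ k ∈ Finset.range n, (a k * (U k).im) * Cjk j k)^2 := by
      intro j
      rw [Complex.sq_norm, Complex.normSq_apply, ← hre, ← him]; ring
    calc (∑ j ∈ Finset.range m, ‖T j‖^2)
        = (∑ j ∈ Finset.range m, (∑ k ∈ Finset.range n, (a k * (U k).re) * Cjk j k)^2)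
          + (∑ j ∈ Finset.range m, (∑ k ∈ Finset.range n, (a k * (U k).im) * Cjk j k)^2) := by
          rw [← Finset.sum_add_distrib]
          exact Finset.sum_congr rfl (fun j _ => hnorm j)
      _ ≤ (∑ k ∈ Finset.range n, (a k * (U k).re)^2) + (∑ k ∈ Finset.range n, (a k * (U k).im)^2) :=
          add_le_add (bessel n _ _) (bessel n _ _)
      _ = ∑ k ∈ Finset.range n, (a k)^2 * ((U k).re^2 + (U k).im^2) := by
          rw [← Finset.sum_add_distrib]
          exact Finset.sum_congr rfl (fun k _ => by ring)
      _ = ∑ k ∈ Finset.range n, (a k)^2 := by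
          refine Finset.sum_congr rfl (fun k _ => ?_)
          have : (U k).re^2 + (U k).im^2 = ‖U k‖^2 := by
            rw [Complex.sq_norm, Complex.normSq_apply]; ring
          rw [this, hU, one_pow, mul_one]
    
  refine step2.trans ?_
  have e1 : (∑ j ∈ Finset.range m, |v j|^2) = ∑ j ∈ Finset.range m, (v j)^2 :=
    Finset.sum_congr rfl (fun j _ => sq_abs _)
  rw [e1]
  exact mul_le_mul_of_nonneg_left (Real.sqrt_le_sqrt hTs) (Real.sqrt_nonneg _)


noncomputable def rr (j k : ℕ) : ℝ := ((k:ℝ)+1)/((j:ℝ)+1)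

lemma rr_pos (j k : ℕ) : 0 < rr j k := by
  unfold rr; positivity

lemma rr_skew (j k : ℕ) : rr j k * Cjk j k = -(Cjk k j) := by
  have h := Cjk_skew j k
  have hj : ((j:ℝ)+1) ≠ 0 := by positivity
  unfold rr
  field_simp
  linarith

noncomputable def UU (z : ℂ) (k : ℕ) : ℂ := Complex.exp (z * (Real.log ((k:ℝ)+1) : ℂ))
noncomputable def WW (z : ℂ) (j : ℕ) : ℂ := Complex.exp (-(z * (Real.log ((j:ℝ)+1) : ℂ)))

lemma UU_norm (z : ℂ) (hz : z.re = 0) (k : ℕ) : ‖UU z k‖ = 1 := by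
  unfold UU
  rw [Complex.norm_exp]
  have : (z * (Real.log ((k:ℝ)+1) : ℂ)).re = z.re * Real.log ((k:ℝ)+1) := by
    simp [Complex.mul_re]
  rw [this, hz, zero_mul, Real.exp_zero]

lemma WW_norm (z : ℂ) (hz : z.re = 0) (j : ℕ) : ‖WW z j‖ = 1 := by
  unfold WW
  rw [Complex.norm_exp]
  have : (-(z * (Real.log ((j:ℝ)+1) : ℂ))).re = -(z.re * Real.log ((j:ℝ)+1)) := by
    simp [Complex.mul_re]
  rw [this, hz, zero_mul, neg_zero, Real.exp_zero]

lemma cpow_fact (z : ℂ) (j k : ℕ) : ((rr j k : ℝ) : ℂ) ^ z = UU z k * WW z j := by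
  have hr := rr_pos j k
  have hk1 : ((k:ℝ)+1) ≠ 0 := by positivity
  have hj1 : ((j:ℝ)+1) ≠ 0 := by positivity
  rw [Complex.cpow_def_of_ne_zero (Complex.ofReal_ne_zero.mpr hr.ne')]
  rw [← Complex.ofReal_log hr.le]
  unfold rr
  rw [Real.log_div hk1 hj1]
  unfold UU WW
  rw [← Complex.exp_add]
  congr 1
  push_cast
  ring

lemma rpow_interp (M x : ℝ) (hM : 0 ≤ M) (hx0 : 0 ≤ x) (hx1 : x ≤ 1) :
    M ^ (1-x) * M ^ x ≤ M := by
  rcases eq_or_lt_of_le hM with h | h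
  · subst h
    rcases eq_or_lt_of_le hx1 with h1 | h1
    · rw [h1, sub_self, Real.rpow_zero, Real.rpow_one, one_mul]
    · rw [Real.zero_rpow (by linarith : (1:ℝ) - x ≠ 0), zero_mul]
  · rw [← Real.rpow_add h, sub_add_cancel, Real.rpow_one]

lemma core (α : ℝ) (hα0 : 0 ≤ α) (hα1 : α ≤ 1/2) (m n : ℕ) (v a : ℕ → ℝ) :
    |∑ j ∈ Finset.range m, ∑ k ∈ Finset.range n, v j * a k * (rr j k) ^ (2*α) * Cjk j k|
      ≤ Real.sqrt (∑ j ∈ Finset.range m, (v j)^2) * Real.sqrt (∑ k ∈ Finset.range n, (a k)^2) := by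
  set M := Real.sqrt (∑ j ∈ Finset.range m, (v j)^2) * Real.sqrt (∑ k ∈ Finset.range n, (a k)^2) with hMdef
  have hM : 0 ≤ M := mul_nonneg (Real.sqrt_nonneg _) (Real.sqrt_nonneg _)
  set G : ℂ → ℂ := fun z => ∑ j ∈ Finset.range m, ∑ k ∈ Finset.range n,
      ((v j : ℝ) : ℂ) * ((a k : ℝ) : ℂ) * (((rr j k : ℝ) : ℂ) ^ z) * ((Cjk j k : ℝ) : ℂ) with hGdef
  have hrne : ∀ j k : ℕ, ((rr j k : ℝ) : ℂ) ≠ 0 :=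
    fun j k => Complex.ofReal_ne_zero.mpr (rr_pos j k).ne'
  have hGdiff : Differentiable ℂ G := by
    apply Differentiable.fun_sum; intro j _
    apply Differentiable.fun_sum; intro k _
    exact ((differentiable_id.const_cpow (Or.inl (hrne j k))).const_mul _).mul_const _
  have hd : DiffContOnCl ℂ G (Complex.HadamardThreeLines.verticalStrip 0 1) :=
    hGdiff.diffContOnCl
  have hB : BddAbove ((norm ∘ G) '' (Complex.HadamardThreeLines.verticalClosedStrip 0 1)) := by
    refine ⟨∑ j ∈ Finset.range m, ∑ k ∈ Finset.range n,
        |v j| * |a k| * max 1 (rr j k) * |Cjk j k|, ?_⟩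
    rintro x ⟨z, hz, rfl⟩
    simp only [Function.comp_apply]
    have hz' : z.re ∈ Set.Icc (0:ℝ) 1 := hz
    calc ‖G z‖ ≤ ∑ j ∈ Finset.range m, ‖∑ k ∈ Finset.range n,
            ((v j : ℝ) : ℂ) * ((a k : ℝ) : ℂ) * (((rr j k : ℝ) : ℂ) ^ z) * ((Cjk j k : ℝ) : ℂ)‖ :=
          norm_sum_le _ _
      _ ≤ ∑ j ∈ Finset.range m, ∑ k ∈ Finset.range n,
            ‖((v j : ℝ) : ℂ) * ((a k : ℝ) : ℂ) * (((rr j k : ℝ) : ℂ) ^ z) * ((Cjk j k : ℝ) : ℂ)‖ :=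
          Finset.sum_le_sum (fun j _ => norm_sum_le _ _)
      _ ≤ ∑ j ∈ Finset.range m, ∑ k ∈ Finset.range n,
            |v j| * |a k| * max 1 (rr j k) * |Cjk j k| := by
          refine Finset.sum_le_sum (fun j _ => Finset.sum_le_sum (fun k _ => ?_))
          rw [norm_mul, norm_mul, norm_mul, Complex.norm_real, Complex.norm_real,
            Complex.norm_real, Real.norm_eq_abs, Real.norm_eq_abs, Real.norm_eq_abs]
          have habs : ‖((rr j k : ℝ) : ℂ) ^ z‖ = (rr j k) ^ z.re := by
                        exact Complex.norm_cpow_eq_rpow_re_of_pos (rr_pos j k) z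
          rw [habs]
          have hle : (rr j k) ^ z.re ≤ max 1 (rr j k) := by
            rcases le_total (rr j k) 1 with h | h
            · exact le_max_of_le_left
                (Real.rpow_le_one (rr_pos j k).le h hz'.1)
            · refine le_max_of_le_right ?_
              calc (rr j k) ^ z.re ≤ (rr j k) ^ (1:ℝ) :=
                    Real.rpow_le_rpow_of_exponent_le h hz'.2
                _ = rr j k := Real.rpow_one _
          exact mul_le_mul_of_nonneg_right
            (mul_le_mul_of_nonneg_left hle (by positivity)) (abs_nonneg _)
  have ha : ∀ z ∈ Complex.re ⁻¹' {0}, ‖G z‖ ≤ M := by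
    intro z hz
    have hz0 : z.re = 0 := hz
    have : G z = ∑ j ∈ Finset.range m, ∑ k ∈ Finset.range n,
        ((v j : ℝ) : ℂ) * ((a k : ℝ) : ℂ) * (UU z k * WW z j) * ((Cjk j k : ℝ) : ℂ) := by
      refine Finset.sum_congr rfl (fun j _ => Finset.sum_congr rfl (fun k _ => ?_))
      rw [cpow_fact]
    rw [this]
    exact edge m n v a (UU z) (WW z) (UU_norm z hz0) (WW_norm z hz0)
  have hb : ∀ z ∈ Complex.re ⁻¹' {1}, ‖G z‖ ≤ M := by
    intro z hz
    have hz1 : (z - 1).re = 0 := by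
      simp only [Complex.sub_re, Complex.one_re]
      have : z.re = 1 := hz
      rw [this]; ring
    have hGz : G z = -(∑ k ∈ Finset.range n, ∑ j ∈ Finset.range m,
        ((a k : ℝ) : ℂ) * ((v j : ℝ) : ℂ) * (WW (z-1) j * UU (z-1) k) * ((Cjk k j : ℝ) : ℂ)) := by
      rw [hGdef]
      dsimp only
      rw [Finset.sum_comm, ← Finset.sum_neg_distrib]
      refine Finset.sum_congr rfl (fun k _ => ?_)
      rw [← Finset.sum_neg_distrib]
      refine Finset.sum_congr rfl (fun j _ => ?_)
      have e1 : ((rr j k : ℝ) : ℂ) ^ z = ((rr j k : ℝ) : ℂ) ^ (z - 1) * ((rr j k : ℝ) : ℂ) := by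
        rw [Complex.cpow_sub _ _ (hrne j k), Complex.cpow_one]
        exact (div_mul_cancel₀ _ (hrne j k)).symm
      rw [e1, cpow_fact]
      have e2 : ((rr j k : ℝ) : ℂ) * ((Cjk j k : ℝ) : ℂ) = -((Cjk k j : ℝ) : ℂ) := by
        rw [← Complex.ofReal_mul, rr_skew]
        push_cast; ring
      calc ((v j : ℝ) : ℂ) * ((a k : ℝ) : ℂ) * (UU (z-1) k * WW (z-1) j * ((rr j k : ℝ) : ℂ)) * ((Cjk j k : ℝ) : ℂ)
          = ((v j : ℝ) : ℂ) * ((a k : ℝ) : ℂ) * (UU (z-1) k * WW (z-1) j) * (((rr j k : ℝ) : ℂ) * ((Cjk j k : ℝ) : ℂ)) := by ring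
        _ = -(((a k : ℝ) : ℂ) * ((v j : ℝ) : ℂ) * (WW (z-1) j * UU (z-1) k) * ((Cjk k j : ℝ) : ℂ)) := by
            rw [e2]; ring
    rw [hGz, norm_neg]
    have := edge n m a v (WW (z-1)) (UU (z-1)) (WW_norm (z-1) hz1) (UU_norm (z-1) hz1)
    refine this.trans (le_of_eq ?_)
    rw [hMdef, mul_comm]
  -- apply Hadamard
  have hz₀ : ((2*α : ℝ) : ℂ) ∈ Complex.HadamardThreeLines.verticalClosedStrip 0 1 := by
    simp only [Complex.HadamardThreeLines.verticalClosedStrip, Set.mem_preimage,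
      Complex.ofReal_re, Set.mem_Icc]
    constructor <;> linarith
  have had := Complex.HadamardThreeLines.norm_le_interp_of_mem_verticalClosedStrip₀₁' G hz₀ hd hB ha hb
  rw [Complex.ofReal_re] at had
  have hle : ‖G ((2*α : ℝ) : ℂ)‖ ≤ M :=
    had.trans (rpow_interp M (2*α) hM (by linarith) (by linarith))
  have hval : G ((2*α : ℝ) : ℂ) = ((∑ j ∈ Finset.range m, ∑ k ∈ Finset.range n,
      v j * a k * (rr j k) ^ (2*α) * Cjk j k : ℝ) : ℂ) := by
    rw [hGdef]
    dsimp only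
    have hterm : ∀ j k : ℕ, ((rr j k : ℝ) : ℂ) ^ ((2*α : ℝ) : ℂ) = ((rr j k ^ (2*α) : ℝ) : ℂ) :=
      fun j k => (Complex.ofReal_cpow (rr_pos j k).le _).symm
    simp only [hterm]
    push_cast
    ring_nf
  rw [hval, Complex.norm_real, Real.norm_eq_abs] at hle
  exact hle


lemma sum_t_sq_le (α : ℝ) (hα0 : 0 ≤ α) (hα1 : α ≤ 1/2) (n : ℕ) (a : ℕ → ℝ) (m : ℕ) :
    (∑ j ∈ Finset.range m, (∑ k ∈ Finset.range n, (rr j k) ^ (2*α) * a k * Cjk j k)^2)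
      ≤ ∑ k ∈ Finset.range n, (a k)^2 := by
  set t : ℕ → ℝ := fun j => ∑ k ∈ Finset.range n, (rr j k) ^ (2*α) * a k * Cjk j k with ht
  have hcore := core α hα0 hα1 m n t a
  have hbil : (∑ j ∈ Finset.range m, ∑ k ∈ Finset.range n, t j * a k * (rr j k) ^ (2*α) * Cjk j k)
      = ∑ j ∈ Finset.range m, (t j)^2 := by
    refine Finset.sum_congr rfl (fun j _ => ?_)
    rw [sq, ht]; dsimp only
    rw [Finset.mul_sum]
    refine Finset.sum_congr rfl (fun k _ => by ring)
  rw [hbil] at hcore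
  have hX : (0:ℝ) ≤ ∑ j ∈ Finset.range m, (t j)^2 := Finset.sum_nonneg (fun j _ => sq_nonneg _)
  have hA : (0:ℝ) ≤ ∑ k ∈ Finset.range n, (a k)^2 := Finset.sum_nonneg (fun k _ => sq_nonneg _)
  rw [abs_of_nonneg hX] at hcore
  set X := ∑ j ∈ Finset.range m, (t j)^2
  set A := ∑ k ∈ Finset.range n, (a k)^2
  have h1 : Real.sqrt X ^ 2 = X := Real.sq_sqrt hX
  have h2 : Real.sqrt A ^ 2 = A := Real.sq_sqrt hA
  nlinarith [sq_nonneg (Real.sqrt X - Real.sqrt A), Real.sqrt_nonneg X, Real.sqrt_nonneg A]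

/-- **`(-A)^{−α} ∇ (-A)^{−1/2+α}` is a contraction on `L²(0,1)` for `α ∈ [0,1/2]`.**
For every finite linear combination `x = Σ_{k<n} a_k h_{k+1}`, the classical derivative of
`(-A)^{α−1/2}x` is `y = Σ_{k<n} (π(k+1))^{2α} a_k g_{k+1}`, and
`‖(-A)^{−α} y‖_{L²} = (Σ_j (π(j+1))^{−4α} ⟨y,h_{j+1}⟩²)^{1/2} ≤ ‖x‖_{L²}`
(the summability conjunct states that the series defining the left norm converges). -/
theorem stmt_9 (α : ℝ) (hα0 : 0 ≤ α) (hα1 : α ≤ 1 / 2) (n : ℕ) (a : ℕ → ℝ) :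
    (Summable fun j : ℕ => (π * (j + 1 : ℝ)) ^ (-(4 * α)) *
        (∫ z in Set.Ioo (0:ℝ) 1,
          (∑ k ∈ Finset.range n, (π * (k + 1 : ℝ)) ^ (2 * α) * a k * cosfun k z) *
            eigfun j z) ^ 2) ∧
    Real.sqrt (∑' j : ℕ, (π * (j + 1 : ℝ)) ^ (-(4 * α)) *
        (∫ z in Set.Ioo (0:ℝ) 1,
          (∑ k ∈ Finset.range n, (π * (k + 1 : ℝ)) ^ (2 * α) * a k * cosfun k z) *
            eigfun j z) ^ 2) ≤
      Real.sqrt (∫ z in Set.Ioo (0:ℝ) 1, (∑ k ∈ Finset.range n, a k * eigfun k z) ^ 2) := by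
  set p : ℕ → ℝ := fun k => (π * (k + 1 : ℝ)) ^ (2 * α) * a k with hp
  set t : ℕ → ℝ := fun j => ∑ k ∈ Finset.range n, (rr j k) ^ (2*α) * a k * Cjk j k with ht
  -- the statement's summand equals (t j)^2
  have hterm : ∀ j : ℕ, (π * (j + 1 : ℝ)) ^ (-(4 * α)) *
      (∫ z in Set.Ioo (0:ℝ) 1,
        (∑ k ∈ Finset.range n, (π * (k + 1 : ℝ)) ^ (2 * α) * a k * cosfun k z) *
          eigfun j z) ^ 2 = (t j)^2 := by
    intro j
    have hx : (0:ℝ) < π * ((j:ℝ) + 1) := by positivity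
    have hint : (∫ z in Set.Ioo (0:ℝ) 1,
        (∑ k ∈ Finset.range n, (π * (k + 1 : ℝ)) ^ (2 * α) * a k * cosfun k z) * eigfun j z)
        = ∑ k ∈ Finset.range n, p k * Cjk j k := by
      have := int_combo n p j
      rw [← this]
    rw [hint]
    have hpow : (π * ((j:ℝ) + 1)) ^ (-(4 * α)) = ((π * ((j:ℝ) + 1)) ^ (-(2 * α)))^2 := by
      rw [sq, ← Real.rpow_add hx]
      congr 1; ring
    rw [hpow, ← mul_pow]
    congr 1
    rw [Finset.mul_sum]
    refine Finset.sum_congr rfl (fun k _ => ?_)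
    have hy : (0:ℝ) < π * ((k:ℝ) + 1) := by positivity
    have hfr : (π * ((k:ℝ) + 1)) / (π * ((j:ℝ) + 1)) = rr j k := by
      unfold rr
      rw [mul_div_mul_left _ _ pi_ne_zero]
    have : (π * ((j:ℝ) + 1)) ^ (-(2 * α)) * (π * ((k:ℝ) + 1)) ^ (2 * α) = (rr j k) ^ (2*α) := by
      rw [Real.rpow_neg hx.le, ← hfr, Real.div_rpow hy.le hx.le]
      rw [div_eq_mul_inv, mul_comm]
    rw [hp]; dsimp only
    rw [show (π * ((j:ℝ) + 1)) ^ (-(2 * α)) * ((π * ((k:ℝ) + 1)) ^ (2 * α) * a k * Cjk j k)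
        = ((π * ((j:ℝ) + 1)) ^ (-(2 * α)) * (π * ((k:ℝ) + 1)) ^ (2 * α)) * a k * Cjk j k by ring]
    rw [this]
  have hRHS : (∫ z in Set.Ioo (0:ℝ) 1, (∑ k ∈ Finset.range n, a k * eigfun k z) ^ 2)
      = ∑ k ∈ Finset.range n, (a k)^2 :=
    int_combo_sq (Finset.range n) a eigfun cont_eig orth_sin
  have hbound : ∀ m : ℕ, (∑ j ∈ Finset.range m, (t j)^2) ≤ ∑ k ∈ Finset.range n, (a k)^2 :=
    fun m => sum_t_sq_le α hα0 hα1 n a m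
  have hsum : Summable (fun j : ℕ => (t j)^2) :=
    summable_of_sum_range_le (fun j => sq_nonneg _) hbound
  constructor
  · exact (summable_congr (fun j => (hterm j))).mpr hsum
  · rw [hRHS]
    apply Real.sqrt_le_sqrt
    calc (∑' j : ℕ, (π * (j + 1 : ℝ)) ^ (-(4 * α)) *
        (∫ z in Set.Ioo (0:ℝ) 1,
          (∑ k ∈ Finset.range n, (π * (k + 1 : ℝ)) ^ (2 * α) * a k * cosfun k z) *
            eigfun j z) ^ 2)
        = ∑' j : ℕ, (t j)^2 := tsum_congr hterm
      _ ≤ ∑ k ∈ Finset.range n, (a k)^2 := Summable.tsum_le_of_sum_range_le hsum hbound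
end
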